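/- Let μ be a Radon measure on ℝ^d with μ(B(x,r)) ≤ C₀ r^n. There is a constant ε₀ = ε₀(C₀,n,d) such that for all cubes P ⊂ Q ⊂ R with centers z_P, z_Q respectively, one has |δ(P,R) − (δ(P,Q) + δ(Q,R))| ≤ ε₀, where δ(A,B) = ∫_{B_A∖A} |x−z_A|^{−n} dμ(x) and B_A is the smallest cube concentric with A containing both A and B. -/

import Mathlib

open MeasureTheory Metric Set ENNReal

noncomputable section

/-- Closed axis-parallel cube centered at `c` with side length `l`. -/
def cube {d : ℕ} (c : EuclideanSpace ℝ (Fin d)) (l : ℝ) :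
    Set (EuclideanSpace ℝ (Fin d)) := {y | ∀ i, |y i - c i| ≤ l / 2}

/-- Side length of the smallest cube concentric with the cube of center `z` and side `l`
containing that cube together with the set `B`. -/
def encSide {d : ℕ} (z : EuclideanSpace ℝ (Fin d)) (l : ℝ)
    (B : Set (EuclideanSpace ℝ (Fin d))) : ℝ :=
  sInf {t : ℝ | l ≤ t ∧ B ⊆ cube z t}

/-- δ(Q,B) = ∫_{Q_B ∖ Q} |x−z_Q|^{−n} dμ(x), where Q is the cube of center `z`
and side `l`, and Q_B is the smallest concentric cube containing Q and B. -/
def cdelta {d : ℕ} (μ : Measure (EuclideanSpace ℝ (Fin d))) (n : ℝ)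
    (z : EuclideanSpace ℝ (Fin d)) (l : ℝ) (B : Set (EuclideanSpace ℝ (Fin d))) : ℝ :=
  ∫ x in cube z (encSide z l B) \ cube z l, dist x z ^ (-n) ∂μ

variable {d : ℕ}

local notation "E" => EuclideanSpace ℝ (Fin d)

lemma cube_mono {z : E} {u v : ℝ} (h : u ≤ v) : cube z u ⊆ cube z v :=
  fun y hy i => (hy i).trans (by linarith)

lemma cube_shift {z z' : E} {h : ℝ} (hz : ∀ i, |z i - z' i| ≤ h) (u : ℝ) :
    cube z u ⊆ cube z' (u + 2*h) := by
  intro y hy i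
  have h3 : |y i - z' i| ≤ |y i - z i| + |z i - z' i| := by
    have he : y i - z' i = (y i - z i) + (z i - z' i) := by ring
    rw [he]; exact abs_add_le _ _
  linarith [hy i, hz i]

lemma mem_cube_self {z : E} {l : ℝ} (hl : 0 ≤ l) : z ∈ cube z l := by
  intro i; simp [abs_of_nonneg, hl]; positivity

def nsup (c z : E) : ℝ := ⨆ i, |c i - z i|

lemma le_nsup [Nonempty (Fin d)] (c z : E) (i : Fin d) : |c i - z i| ≤ nsup c z := by
  unfold nsup
  exact le_ciSup (Set.finite_range fun i => |c i - z i|).bddAbove i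

lemma nsup_le [Nonempty (Fin d)] {c z : E} {a : ℝ} (h : ∀ i, |c i - z i| ≤ a) :
    nsup c z ≤ a := ciSup_le h

lemma nsup_nonneg [Nonempty (Fin d)] (c z : E) : 0 ≤ nsup c z :=
  le_trans (abs_nonneg _) (le_nsup c z (Classical.arbitrary _))

lemma nsup_comm (c z : E) : nsup c z = nsup z c := by
  unfold nsup; congr 1; ext i; rw [abs_sub_comm]

lemma cube_subset_iff [Nonempty (Fin d)] {c z : E} {L t : ℝ} (hL : 0 < L) :
    cube c L ⊆ cube z t ↔ L + 2 * nsup c z ≤ t := by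
  constructor
  · intro hsub
    have key : ∀ i : Fin d, |c i - z i| + L/2 ≤ t/2 := by
      intro i
      set s : ℝ := if 0 ≤ c i - z i then (1:ℝ) else -1 with hs
      have hs1 : |s| = 1 := by rw [hs]; split <;> simp
      let y : E := WithLp.toLp 2 (fun j => if j = i then c j + L/2 * s else c j : Fin d → ℝ)
      have hyj : ∀ j, y j = if j = i then c j + L/2 * s else c j := fun j => rfl
      have hyc : y ∈ cube c L := by
        intro j
        rw [hyj j]
        by_cases hj : j = i
        · rw [if_pos hj, show c j + L/2 * s - c j = L/2 * s by ring, abs_mul, hs1,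
            abs_of_nonneg (by linarith : (0:ℝ) ≤ L/2)]
          simp
        · rw [if_neg hj]
          simpa using by linarith
      have := hsub hyc i
      rw [hyj i, if_pos rfl] at this
      have habs : |c i + L/2 * s - z i| = |c i - z i| + L/2 := by
        rw [hs]; split <;> rename_i hsign
        · rw [abs_of_nonneg (by linarith), abs_of_nonneg hsign]; ring
        · push_neg at hsign
          rw [abs_of_nonpos (by linarith), abs_of_neg hsign]; ring
      rw [habs] at this
      linarith
    have hns : nsup c z ≤ (t - L)/2 := nsup_le (fun i => by linarith [key i])
    linarith
  · intro h
    refine subset_trans (cube_shift (fun i => le_nsup c z i) L) (cube_mono ?_)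
    linarith

lemma encSide_cube [Nonempty (Fin d)] {z c : E} {l L : ℝ} (hL : 0 < L) :
    encSide z l (cube c L) = max l (L + 2 * nsup c z) := by
  unfold encSide
  have : {t : ℝ | l ≤ t ∧ cube c L ⊆ cube z t} = Ici (max l (L + 2 * nsup c z)) := by
    ext t
    constructor
    · rintro ⟨h1, h2⟩
      exact max_le h1 ((cube_subset_iff hL).1 h2)
    · intro h
      exact ⟨le_trans (le_max_left _ _) h,
        (cube_subset_iff hL).2 (le_trans (le_max_right _ _) h)⟩
  rw [this, csInf_Ici]

lemma coord_le_dist (x z : E) (i : Fin d) : |x i - z i| ≤ dist x z := by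
  rw [EuclideanSpace.dist_eq]
  have h1 : (x i - z i)^2 ≤ ∑ j, dist (x j) (z j) ^ 2 := by
    have : dist (x i) (z i) ^ 2 = (x i - z i)^2 := by
      rw [Real.dist_eq, sq_abs]
    rw [← this]
    exact Finset.single_le_sum (f := fun j => dist (x j) (z j) ^ 2) (fun j _ => sq_nonneg _) (Finset.mem_univ i)
  calc |x i - z i| = Real.sqrt ((x i - z i)^2) := (Real.sqrt_sq_eq_abs _).symm
  _ ≤ _ := Real.sqrt_le_sqrt h1

lemma dist_le_of_mem_cube {x z : E} {l : ℝ} (hl : 0 ≤ l) (hx : x ∈ cube z l) :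
    dist x z ≤ Real.sqrt d * (l/2) := by
  rw [EuclideanSpace.dist_eq]
  have h1 : ∑ j, dist (x j) (z j) ^ 2 ≤ (d : ℝ) * (l/2)^2 := by
    calc ∑ j, dist (x j) (z j) ^ 2 ≤ ∑ _j : Fin d, (l/2)^2 := by
          refine Finset.sum_le_sum fun j _ => ?_
          rw [Real.dist_eq]
          exact pow_le_pow_left₀ (abs_nonneg _) (hx j) 2
    _ = (d : ℝ) * (l/2)^2 := by simp [Finset.sum_const, mul_comm]
  calc Real.sqrt (∑ j, dist (x j) (z j) ^ 2) ≤ Real.sqrt ((d:ℝ) * (l/2)^2) :=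
        Real.sqrt_le_sqrt h1
  _ = Real.sqrt d * (l/2) := by
        rw [Real.sqrt_mul (by positivity), Real.sqrt_sq (by linarith)]

lemma measurableSet_cube (z : E) (l : ℝ) : MeasurableSet (cube z l) := by
  have : cube z l = ⋂ i, {y : E | |y i - z i| ≤ l/2} := by
    ext y; simp [cube, mem_iInter]
  rw [this]
  refine MeasurableSet.iInter fun i => ?_
  have hc : Continuous fun y : E => |y i - z i| :=
    ((EuclideanSpace.proj (𝕜 := ℝ) i).continuous.sub continuous_const).abs
  exact (isClosed_le hc continuous_const).measurableSet

lemma meas_kernel {m : ℝ} (hm : m ≠ 0) (z : E) :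
    Measurable fun x : E => dist x z ^ (-m) := by
  have hd : Measurable fun x : E => dist x z :=
    (continuous_id.dist continuous_const).measurable
  have heq : (fun x : E => dist x z ^ (-m)) = fun x =>
      if dist x z = 0 then 0 else Real.exp (Real.log (dist x z) * (-m)) := by
    funext x
    split <;> rename_i h
    · rw [h, Real.zero_rpow (by simpa using hm)]
    · rw [Real.rpow_def_of_pos (lt_of_le_of_ne dist_nonneg (Ne.symm h))]
  rw [heq]
  exact Measurable.ite (hd (measurableSet_singleton 0))
    measurable_const ((Real.measurable_log.comp hd).mul measurable_const).exp

lemma rpow_neg_diff_le {n a r₁ r₂ : ℝ} (hn : 0 < n) (ha : 0 < a) (h1 : a ≤ r₁) (h2 : a ≤ r₂) :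
    |r₁ ^ (-n) - r₂ ^ (-n)| ≤ n * |r₁ - r₂| * a ^ (-(n+1)) := by
  have key : ∀ u v : ℝ, a ≤ u → a ≤ v → u ≤ v →
      |v ^ (-n) - u ^ (-n)| ≤ n * a ^ (-(n+1)) * |v - u| := by
    intro u v hu hv huv
    have hs : Convex ℝ (Icc u v) := convex_Icc u v
    have hderiv : ∀ x ∈ Icc u v, HasDerivWithinAt (fun y : ℝ => y ^ (-n))
        ((-n) * x ^ (-n - 1)) (Icc u v) x := by
      intro x hx
      have hx0 : x ≠ 0 := by
        have : 0 < x := lt_of_lt_of_le ha (le_trans hu hx.1)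
        exact this.ne'
      exact (Real.hasDerivAt_rpow_const (Or.inl hx0)).hasDerivWithinAt
    have hbound : ∀ x ∈ Icc u v, ‖(-n) * x ^ (-n - 1)‖ ≤ n * a ^ (-(n+1)) := by
      intro x hx
      rw [norm_mul, Real.norm_eq_abs, Real.norm_eq_abs, abs_neg, abs_of_pos hn,
        abs_of_nonneg (Real.rpow_nonneg (by linarith [hx.1]) _)]
      have h4 : -n - 1 = -(n+1) := by ring
      rw [h4]
      have : x ^ (-(n+1)) ≤ a ^ (-(n+1)) :=
        Real.rpow_le_rpow_of_nonpos ha (by linarith [hx.1]) (by linarith)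
      exact mul_le_mul_of_nonneg_left this hn.le
    have := hs.norm_image_sub_le_of_norm_hasDerivWithin_le hderiv hbound
      (left_mem_Icc.2 huv) (right_mem_Icc.2 huv)
    simpa [Real.norm_eq_abs] using this
  rcases le_total r₁ r₂ with h | h
  · have := key r₁ r₂ h1 h2 h
    rw [abs_sub_comm (r₁ ^ (-n))]
    calc |r₂ ^ (-n) - r₁ ^ (-n)| ≤ n * a ^ (-(n+1)) * |r₂ - r₁| := this
    _ = n * |r₁ - r₂| * a ^ (-(n+1)) := by rw [abs_sub_comm]; ring
  · have := key r₂ r₁ h2 h1 h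
    calc |r₁ ^ (-n) - r₂ ^ (-n)| ≤ n * a ^ (-(n+1)) * |r₁ - r₂| := this
    _ = n * |r₁ - r₂| * a ^ (-(n+1)) := by ring

variable {n C₀ : ℝ}

lemma dist_ge_of_not_mem_cube {x z : E} {r : ℝ} (hx : x ∉ cube z r) :
    r/2 ≤ dist x z := by
  have : ∃ i, ¬(|x i - z i| ≤ r/2) := by
    by_contra h; push_neg at h; exact hx fun i => h i
  obtain ⟨i, hi⟩ := this
  push_neg at hi
  exact le_trans hi.le (coord_le_dist x z i)

variable {n C₀ : ℝ}

lemma annulus_bound (hn : 0 < n) (hC₀ : 0 < C₀) (hd : 0 < d)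
    (μ : Measure E)
    (hμ : ∀ (x : E) (r : ℝ), 0 < r → μ (closedBall x r) ≤ ENNReal.ofReal (C₀ * r ^ n))
    {z : E} {r L : ℝ} (hr : 0 < r) (hL : 0 < L) :
    ∫⁻ x in cube z L \ cube z r, ENNReal.ofReal (dist x z ^ (-n)) ∂μ ≤
      ENNReal.ofReal (C₀ * (Real.sqrt d * L / r) ^ n) := by
  have hsd : 0 < Real.sqrt d := Real.sqrt_pos.2 (by exact_mod_cast hd)
  have hb : ∀ x ∈ cube z L \ cube z r,
      ENNReal.ofReal (dist x z ^ (-n)) ≤ ENNReal.ofReal ((r/2) ^ (-n)) := by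
    intro x hx
    exact ENNReal.ofReal_le_ofReal
      (Real.rpow_le_rpow_of_nonpos (half_pos hr) (dist_ge_of_not_mem_cube hx.2)
        (neg_nonpos.2 hn.le))
  calc ∫⁻ x in cube z L \ cube z r, ENNReal.ofReal (dist x z ^ (-n)) ∂μ
      ≤ ∫⁻ _x in cube z L \ cube z r, ENNReal.ofReal ((r/2) ^ (-n)) ∂μ :=
        setLIntegral_mono measurable_const hb
    _ = ENNReal.ofReal ((r/2) ^ (-n)) * μ (cube z L \ cube z r) :=
        setLIntegral_const _ _
    _ ≤ ENNReal.ofReal ((r/2) ^ (-n)) * ENNReal.ofReal (C₀ * (Real.sqrt d * (L/2)) ^ n) := by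
        refine mul_le_mul_right (le_trans (measure_mono ?_) (hμ z _ (by positivity))) _
        exact fun x hx => mem_closedBall.2 (dist_le_of_mem_cube hL.le hx.1)
    _ = ENNReal.ofReal ((r/2) ^ (-n) * (C₀ * (Real.sqrt d * (L/2)) ^ n)) :=
        (ENNReal.ofReal_mul (Real.rpow_nonneg (by positivity) _)).symm
    _ ≤ ENNReal.ofReal (C₀ * (Real.sqrt d * L / r) ^ n) := by
        refine ENNReal.ofReal_le_ofReal (le_of_eq ?_)
        have e1 : Real.sqrt d * L / r = (Real.sqrt d * (L/2)) / (r/2) := by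
          field_simp
        have e2 : (r/2:ℝ) ^ (-n) = ((r/2:ℝ)^n)⁻¹ := Real.rpow_neg (by positivity) n
        calc (r/2:ℝ)^(-n) * (C₀ * (Real.sqrt d * (L/2))^n)
            = C₀ * ((Real.sqrt d * (L/2))^n / (r/2:ℝ)^n) := by rw [e2]; ring
          _ = C₀ * ((Real.sqrt d * (L/2)) / (r/2:ℝ))^n := by
              rw [show ((Real.sqrt d * (L/2)) / (r/2:ℝ))^n
                  = (Real.sqrt d * (L/2))^n / (r/2:ℝ)^n from
                Real.div_rpow (by positivity) (by positivity) n]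
          _ = C₀ * (Real.sqrt d * L / r) ^ n := by rw [← e1]

lemma tail_bound (hn : 0 < n) (hC₀ : 0 < C₀)
    (μ : Measure E)
    (hμ : ∀ (x : E) (r : ℝ), 0 < r → μ (closedBall x r) ≤ ENNReal.ofReal (C₀ * r ^ n))
    {z : E} {ρ : ℝ} (hρ : 0 < ρ) :
    ∫⁻ x in {x : E | ρ ≤ dist x z}, ENNReal.ofReal (dist x z ^ (-(n+1))) ∂μ ≤
      ENNReal.ofReal (C₀ * 2 ^ (n+2) / ρ) := by
  set A : ℕ → Set E := fun k =>
    {x | (2:ℝ)^k * ρ ≤ dist x z ∧ dist x z ≤ (2:ℝ)^(k+1) * ρ} with hA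
  have hcover : {x : E | ρ ≤ dist x z} ⊆ ⋃ k, A k := by
    intro x hx
    have h1 : 1 ≤ dist x z / ρ := (one_le_div hρ).2 hx
    obtain ⟨k, hk1, hk2⟩ := exists_nat_pow_near h1 one_lt_two
    exact mem_iUnion.2 ⟨k, (le_div_iff₀ hρ).1 hk1, ((div_le_iff₀ hρ).1 hk2.le)⟩
  have hterm : ∀ k : ℕ, ∫⁻ x in A k, ENNReal.ofReal (dist x z ^ (-(n+1))) ∂μ ≤
      ENNReal.ofReal (C₀ * 2^n / ρ * (2⁻¹:ℝ)^k) := by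
    intro k
    have hx2 : (0:ℝ) < 2^k := by positivity
    calc ∫⁻ x in A k, ENNReal.ofReal (dist x z ^ (-(n+1))) ∂μ
        ≤ ∫⁻ _x in A k, ENNReal.ofReal (((2:ℝ)^k * ρ) ^ (-(n+1))) ∂μ := by
          refine setLIntegral_mono measurable_const fun x hx => ?_
          exact ENNReal.ofReal_le_ofReal
            (Real.rpow_le_rpow_of_nonpos (by positivity) hx.1 (by linarith))
      _ = ENNReal.ofReal (((2:ℝ)^k * ρ) ^ (-(n+1))) * μ (A k) := setLIntegral_const _ _
      _ ≤ ENNReal.ofReal (((2:ℝ)^k * ρ) ^ (-(n+1))) *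
            ENNReal.ofReal (C₀ * ((2:ℝ)^(k+1) * ρ) ^ n) := by
          refine mul_le_mul_right (le_trans (measure_mono ?_) (hμ z _ (by positivity))) _
          exact fun x hx => mem_closedBall.2 hx.2
      _ = ENNReal.ofReal (((2:ℝ)^k * ρ) ^ (-(n+1)) * (C₀ * ((2:ℝ)^(k+1) * ρ) ^ n)) :=
          (ENNReal.ofReal_mul (Real.rpow_nonneg (by positivity) _)).symm
      _ ≤ ENNReal.ofReal (C₀ * 2^n / ρ * (2⁻¹:ℝ)^k) := by
          refine ENNReal.ofReal_le_ofReal (le_of_eq ?_)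
          have e1 : ((2:ℝ)^k * ρ) ^ (-(n+1)) = ((2:ℝ)^k) ^ (-(n+1)) * ρ ^ (-(n+1)) :=
            Real.mul_rpow hx2.le hρ.le
          have e2 : ((2:ℝ)^(k+1) * ρ) ^ n = ((2:ℝ)^k) ^ n * ((2:ℝ)^n * ρ^n) := by
            rw [pow_succ, show (2:ℝ)^k * 2 * ρ = (2:ℝ)^k * (2 * ρ) by ring,
              Real.mul_rpow hx2.le (by positivity), Real.mul_rpow (by norm_num) hρ.le]
          have e3 : ((2:ℝ)^k) ^ (-(n+1)) * ((2:ℝ)^k) ^ n = ((2:ℝ)^k)⁻¹ := by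
            rw [← Real.rpow_add hx2, show -(n+1) + n = -1 by ring, Real.rpow_neg_one]
          have e4 : ρ ^ (-(n+1)) * ρ ^ n = ρ⁻¹ := by
            rw [← Real.rpow_add hρ, show -(n+1) + n = -1 by ring, Real.rpow_neg_one]
          calc ((2:ℝ)^k * ρ) ^ (-(n+1)) * (C₀ * ((2:ℝ)^(k+1) * ρ) ^ n)
              = (((2:ℝ)^k) ^ (-(n+1)) * ((2:ℝ)^k) ^ n) * ((ρ ^ (-(n+1))) * ρ ^ n) *
                (C₀ * (2:ℝ)^n) := by rw [e1, e2]; ring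
            _ = C₀ * 2^n / ρ * (2⁻¹:ℝ)^k := by rw [e3, e4, inv_pow]; ring
  have h2inv : ENNReal.ofReal (2⁻¹:ℝ) = (2⁻¹ : ℝ≥0∞) := by
    rw [ENNReal.ofReal_inv_of_pos two_pos, ENNReal.ofReal_ofNat]
  have hgeom : ∑' k : ℕ, ((2:ℝ≥0∞)⁻¹)^k = 2 := by
    rw [ENNReal.tsum_geometric, ENNReal.one_sub_inv_two, inv_inv]
  calc ∫⁻ x in {x : E | ρ ≤ dist x z}, ENNReal.ofReal (dist x z ^ (-(n+1))) ∂μ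
      ≤ ∫⁻ x in ⋃ k, A k, ENNReal.ofReal (dist x z ^ (-(n+1))) ∂μ :=
        lintegral_mono_set hcover
    _ ≤ ∑' k, ∫⁻ x in A k, ENNReal.ofReal (dist x z ^ (-(n+1))) ∂μ :=
        lintegral_iUnion_le _ _
    _ ≤ ∑' k, ENNReal.ofReal (C₀ * 2^n / ρ * (2⁻¹:ℝ)^k) := ENNReal.tsum_le_tsum hterm
    _ = ∑' k, ENNReal.ofReal (C₀ * 2^n / ρ) * ((2:ℝ≥0∞)⁻¹)^k := by
        congr 1; funext k
        rw [ENNReal.ofReal_mul (by positivity), ENNReal.ofReal_pow (by norm_num), h2inv]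
    _ = ENNReal.ofReal (C₀ * 2^n / ρ) * 2 := by rw [ENNReal.tsum_mul_left, hgeom]
    _ ≤ ENNReal.ofReal (C₀ * 2 ^ (n+2) / ρ) := by
        rw [show (2:ℝ≥0∞) = ENNReal.ofReal (2:ℝ) by simp,
          ← ENNReal.ofReal_mul (by positivity)]
        refine ENNReal.ofReal_le_ofReal ?_
        have e5 : (2:ℝ) ^ (n+2) = 2^n * 4 := by
          rw [Real.rpow_add two_pos, show ((2:ℝ)^(2:ℝ)) = 4 by
            rw [show (2:ℝ) = ((2:ℕ):ℝ) by norm_num, Real.rpow_natCast]; norm_num]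
        rw [e5, div_mul_eq_mul_div, div_le_div_iff_of_pos_right hρ]
        have h2n : (0:ℝ) < 2^n := Real.rpow_pos_of_pos two_pos n
        nlinarith [hC₀.le, h2n.le]

set_option maxHeartbeats 2000000 in
theorem stmt5 {d : ℕ} (n C₀ : ℝ) (hn : 0 < n) (hnd : n ≤ d) (hC₀ : 0 < C₀) :
    ∃ ε₀ : ℝ, 0 < ε₀ ∧
      ∀ (μ : Measure (EuclideanSpace ℝ (Fin d))), Measure.Regular μ →
        (∀ (x : EuclideanSpace ℝ (Fin d)) (r : ℝ), 0 < r →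
          μ (Metric.closedBall x r) ≤ ENNReal.ofReal (C₀ * r ^ n)) →
        ∀ (zP zQ zR : EuclideanSpace ℝ (Fin d)) (lP lQ lR : ℝ),
          0 < lP → 0 < lQ → 0 < lR →
          cube zP lP ⊆ cube zQ lQ → cube zQ lQ ⊆ cube zR lR →
          |cdelta μ n zP lP (cube zR lR) -
            (cdelta μ n zP lP (cube zQ lQ) + cdelta μ n zQ lQ (cube zR lR))| ≤ ε₀ := by
  have hd : 0 < d := by
    by_contra h
    push_neg at h
    interval_cases d
    · simp at hnd; linarith
  haveI : Nonempty (Fin d) := ⟨⟨0, hd⟩⟩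
  set q : ℝ := Real.sqrt d with hqdef
  have hq0 : 0 < q := Real.sqrt_pos.2 (by exact_mod_cast hd)
  have hq1 : 1 ≤ q := by
    rw [hqdef, show (1:ℝ) = Real.sqrt 1 by simp]
    exact Real.sqrt_le_sqrt (by exact_mod_cast hd)
  set K₁ : ℝ := C₀ * (3*q)^n with hK₁def
  set K₂ : ℝ := C₀ * n * q * (1+q)^(n+1) * 2^(n+2) with hK₂def
  have hK₁pos : 0 < K₁ := mul_pos hC₀ (Real.rpow_pos_of_pos (by linarith) n)
  have hK₂pos : 0 < K₂ :=
    mul_pos (mul_pos (mul_pos (mul_pos hC₀ hn) hq0)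
      (Real.rpow_pos_of_pos (by linarith) (n+1))) (Real.rpow_pos_of_pos two_pos (n+2))
  refine ⟨K₂ + 2*K₁, by linarith, ?_⟩
  intro μ _hreg hμ zP zQ zR lP lQ lR hlP hlQ hlR hPQ hQR
  -- geometry bookkeeping
  set a : ℝ := nsup zP zQ with hadef
  set b : ℝ := nsup zR zP with hbdef
  set c : ℝ := nsup zR zQ with hcdef
  have ha0 : 0 ≤ a := nsup_nonneg _ _
  have hb0 : 0 ≤ b := nsup_nonneg _ _
  have hc0 : 0 ≤ c := nsup_nonneg _ _
  have hPQ' : lP + 2*a ≤ lQ := (cube_subset_iff hlP).1 hPQ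
  have hQR' : lQ + 2*(nsup zQ zR) ≤ lR := (cube_subset_iff hlQ).1 hQR
  have hc' : lQ + 2*c ≤ lR := by rwa [nsup_comm zQ zR] at hQR'
  have hlPQ : lP ≤ lQ := by linarith
  have hlQR : lQ ≤ lR := by linarith
  set s : ℝ := lQ + 2*a with hsdef
  set S : ℝ := lR + 2*b with hSdef
  set T : ℝ := lR + 2*c with hTdef
  have hs_pos : 0 < s := by linarith
  have hS_pos : 0 < S := by linarith
  have hT_pos : 0 < T := by linarith
  have hlQs : lQ ≤ s := by linarith
  have hshift_PQ : ∀ u : ℝ, cube zP u ⊆ cube zQ (u + 2*a) :=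
    fun u => cube_shift (fun i => le_nsup zP zQ i) u
  have hshift_QP : ∀ u : ℝ, cube zQ u ⊆ cube zP (u + 2*a) := by
    intro u
    refine cube_shift (fun i => ?_) u
    rw [show a = nsup zQ zP from (nsup_comm zQ zP).symm ▸ (nsup_comm zP zQ)]
    exact le_nsup zQ zP i
  have hRS : cube zR lR ⊆ cube zP S := by
    rw [cube_subset_iff hlR, ← hbdef]
  have hRT : cube zR lR ⊆ cube zQ T := by
    rw [cube_subset_iff hlR, ← hcdef]
  have hsS : s ≤ S := by
    have h2 : cube zQ lQ ⊆ cube zP S := hQR.trans hRS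
    rw [cube_subset_iff hlQ, nsup_comm zQ zP, ← hadef] at h2
    linarith
  have hTS : T ≤ S + 2*a := by
    have h1 : cube zR lR ⊆ cube zQ (S + 2*a) := hRS.trans (hshift_PQ S)
    rw [cube_subset_iff hlR, ← hcdef] at h1
    linarith
  have hST : S ≤ T + 2*a := by
    have h1 : cube zR lR ⊆ cube zP (T + 2*a) := hRT.trans (hshift_QP T)
    rw [cube_subset_iff hlR, ← hbdef] at h1
    linarith
  have h2alQ : 2*a ≤ lQ := by linarith
  have hQs : cube zQ lQ ⊆ cube zP s := by
    have h2 := hshift_QP lQ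
    rwa [← hsdef] at h2
  -- encSide values
  have eP_R : encSide zP lP (cube zR lR) = S := by
    rw [encSide_cube hlR, ← hbdef, ← hSdef]
    exact max_eq_right (by linarith [hSdef.ge])
  have eP_Q : encSide zP lP (cube zQ lQ) = s := by
    rw [encSide_cube hlQ, nsup_comm zQ zP, ← hadef, ← hsdef]
    exact max_eq_right (by linarith [hsdef.ge])
  have eQ_R : encSide zQ lQ (cube zR lR) = T := by
    rw [encSide_cube hlR, ← hcdef, ← hTdef]
    exact max_eq_right (by linarith [hTdef.ge])
  -- lintegral quantities
  set F : EuclideanSpace ℝ (Fin d) → EuclideanSpace ℝ (Fin d) → ℝ≥0∞ := fun z x => ENNReal.ofReal (dist x z ^ (-n)) with hFdef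
  have hFmeas : ∀ z : EuclideanSpace ℝ (Fin d), Measurable (F z) :=
    fun z => (meas_kernel hn.ne' z).ennreal_ofReal
  have hann : ∀ (z : EuclideanSpace ℝ (Fin d)) (r L : ℝ), 0 < r → 0 < L →
      ∫⁻ x in cube z L \ cube z r, F z x ∂μ ≤ ENNReal.ofReal (C₀ * (q * L / r) ^ n) := by
    intro z r L hr hL
    simp only [hFdef, hqdef]
    exact annulus_bound hn hC₀ hd μ hμ hr hL
  have htail : ∀ (z : EuclideanSpace ℝ (Fin d)) (ρ : ℝ), 0 < ρ →
      ∫⁻ x in {x : EuclideanSpace ℝ (Fin d) | ρ ≤ dist x z},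
        ENNReal.ofReal (dist x z ^ (-(n+1))) ∂μ ≤ ENNReal.ofReal (C₀ * 2 ^ (n+2) / ρ) :=
    fun z ρ hρ => tail_bound hn hC₀ μ hμ hρ
  set AA : Set (EuclideanSpace ℝ (Fin d)) := cube zP S \ cube zP s with hAAdef
  set BB : Set (EuclideanSpace ℝ (Fin d)) := cube zQ T \ cube zQ lQ with hBBdef
  set X : ℝ≥0∞ := ∫⁻ x in cube zP S \ cube zP lP, F zP x ∂μ with hXdef
  set Y : ℝ≥0∞ := ∫⁻ x in cube zP s \ cube zP lP, F zP x ∂μ with hYdef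
  set IA : ℝ≥0∞ := ∫⁻ x in AA, F zP x ∂μ with hIAdef
  set IB : ℝ≥0∞ := ∫⁻ x in BB, F zQ x ∂μ with hIBdef
  -- cdelta as toReal of lintegrals
  have hcd : ∀ (z : EuclideanSpace ℝ (Fin d)) (l L : ℝ), (∫ x in cube z L \ cube z l, dist x z ^ (-n) ∂μ) =
      (∫⁻ x in cube z L \ cube z l, F z x ∂μ).toReal := by
    intro z l L
    exact integral_eq_lintegral_of_nonneg_ae
      (ae_of_all _ fun x => Real.rpow_nonneg dist_nonneg _)
      ((meas_kernel hn.ne' z).aestronglyMeasurable)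
  have hcd1 : cdelta μ n zP lP (cube zR lR) = X.toReal := by
    unfold cdelta; rw [eP_R]; exact hcd zP lP S
  have hcd2 : cdelta μ n zP lP (cube zQ lQ) = Y.toReal := by
    unfold cdelta; rw [eP_Q]; exact hcd zP lP s
  have hcd3 : cdelta μ n zQ lQ (cube zR lR) = IB.toReal := by
    unfold cdelta; rw [eQ_R, hIBdef, hBBdef]; exact hcd zQ lQ T
  -- split X = Y + IA
  have hsplitset : cube zP S \ cube zP lP =
      (cube zP s \ cube zP lP) ∪ AA := by
    ext x
    constructor
    · rintro ⟨h1, h2⟩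
      by_cases hx : x ∈ cube zP s
      · exact Or.inl ⟨hx, h2⟩
      · exact Or.inr ⟨h1, hx⟩
    · rintro (⟨h1, h2⟩ | ⟨h1, h2⟩)
      · exact ⟨cube_mono hsS h1, h2⟩
      · exact ⟨h1, fun hx => h2 (cube_mono (by linarith) hx)⟩
  have hXsplit : X = Y + IA := by
    rw [hXdef, hsplitset]
    exact lintegral_union ((measurableSet_cube _ _).diff (measurableSet_cube _ _))
      (Set.disjoint_left.2 fun x h1 h2 => h2.2 h1.1)
  -- finiteness
  have hXfin : X ≠ ⊤ :=
    ((hann zP lP S hlP hS_pos).trans_lt ENNReal.ofReal_lt_top).ne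
  have hYfin : Y ≠ ⊤ :=
    ((hann zP lP s hlP hs_pos).trans_lt ENNReal.ofReal_lt_top).ne
  have hIBfin : IB ≠ ⊤ := by
    rw [hIBdef, hBBdef]
    exact ((hann zQ lQ T hlQ hT_pos).trans_lt ENNReal.ofReal_lt_top).ne
  have hIAleX : IA ≤ X := lintegral_mono_set (Set.diff_subset_diff_right (cube_mono (by linarith)))
  have hIAfin : IA ≠ ⊤ := (hIAleX.trans_lt (lt_top_iff_ne_top.2 hXfin)).ne
  -- pointwise difference bound on AA ∩ BB
  set cst : ℝ := n * (q*(lQ/2)) * (1+q)^(n+1) with hcstdef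
  have hcst0 : 0 ≤ cst := by
    have := Real.rpow_nonneg (show (0:ℝ) ≤ 1+q by linarith) (n+1)
    have h2 : 0 ≤ q*(lQ/2) := by positivity
    positivity
  have hptabs : ∀ x ∈ AA ∩ BB,
      |dist x zP ^ (-n) - dist x zQ ^ (-n)| ≤ cst * dist x zQ ^ (-(n+1)) := by
    rintro x ⟨hxA, hxB⟩
    set r₁ : ℝ := dist x zP with hr₁def
    set r₂ : ℝ := dist x zQ with hr₂def
    have hr1 : lQ/2 ≤ r₁ := le_trans (by linarith) (dist_ge_of_not_mem_cube hxA.2)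
    have hr2 : lQ/2 ≤ r₂ := dist_ge_of_not_mem_cube hxB.2
    have hδ : dist zP zQ ≤ q * (lQ/2) :=
      dist_le_of_mem_cube hlQ.le (hPQ (mem_cube_self hlP.le))
    have htri : r₂ - dist zP zQ ≤ r₁ := by
      have h3 := dist_triangle x zP zQ
      linarith [h3]
    set ρ : ℝ := r₂ / (1+q) with hρdef
    have hρpos : 0 < ρ := by
      apply div_pos (by linarith) (by linarith)
    have hρ2 : ρ ≤ r₂ := by
      rw [hρdef]
      exact div_le_self (by linarith) (by linarith)
    have hρ1 : ρ ≤ r₁ := by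
      rcases le_or_gt r₂ ((1+q)*(lQ/2)) with h | h
      · have : ρ ≤ lQ/2 := by
          rw [hρdef, div_le_iff₀ (by linarith)]
          linarith [h]
        linarith
      · have h1 : lQ/2 < r₂/(1+q) := by
          rw [lt_div_iff₀ (by linarith)]
          linarith
        have h2 : q * (lQ/2) < q * (r₂/(1+q)) := by
          exact mul_lt_mul_of_pos_left h1 hq0
        have h3 : r₂ - q * (r₂/(1+q)) = ρ := by
          rw [hρdef]; field_simp; ring
        linarith
    have hmvt := rpow_neg_diff_le hn hρpos hρ1 hρ2
    have habsd : |r₁ - r₂| ≤ q * (lQ/2) := by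
      have := abs_dist_sub_le zP zQ x
      rw [dist_comm zP x, dist_comm zQ x] at this
      linarith [this, hδ]
    clear_value ρ
    clear_value r₁ r₂
    have hρ_id : ρ ^ (-(n+1)) = r₂ ^ (-(n+1)) * (1+q)^(n+1) := by
      rw [hρdef, Real.div_rpow (by linarith) (by linarith) (-(n+1)),
        Real.rpow_neg (by linarith : (0:ℝ) ≤ 1+q) (n+1), div_eq_mul_inv, inv_inv]
    calc |r₁ ^ (-n) - r₂ ^ (-n)| ≤ n * |r₁ - r₂| * ρ ^ (-(n+1)) := hmvt
      _ = (n * |r₁ - r₂| * (1+q)^(n+1)) * r₂ ^ (-(n+1)) := by rw [hρ_id]; ring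
      _ ≤ cst * r₂ ^ (-(n+1)) := by
          refine mul_le_mul_of_nonneg_right ?_ (Real.rpow_nonneg (by linarith) _)
          rw [hcstdef]
          have h1 : 0 ≤ (1+q:ℝ)^(n+1) := Real.rpow_nonneg (by linarith) _
          exact mul_le_mul_of_nonneg_right
            (mul_le_mul_of_nonneg_left habsd hn.le) h1
  -- the tail-integral bound
  set G : EuclideanSpace ℝ (Fin d) → ℝ≥0∞ := fun x => ENNReal.ofReal (cst * dist x zQ ^ (-(n+1))) with hGdef
  have hGmeas : Measurable G := by
    have h1 : Measurable fun x : EuclideanSpace ℝ (Fin d) => dist x zQ ^ (-(n+1)) :=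
      meas_kernel (by linarith : n+1 ≠ 0) zQ
    exact (h1.const_mul cst).ennreal_ofReal
  have hGbound : ∫⁻ x in AA ∩ BB, G x ∂μ ≤ ENNReal.ofReal K₂ := by
    have hsub : AA ∩ BB ⊆ {x : EuclideanSpace ℝ (Fin d) | lQ/2 ≤ dist x zQ} :=
      fun x hx => dist_ge_of_not_mem_cube hx.2.2
    calc ∫⁻ x in AA ∩ BB, G x ∂μ
        = ∫⁻ x in AA ∩ BB,
            ENNReal.ofReal cst * ENNReal.ofReal (dist x zQ ^ (-(n+1))) ∂μ := by
          refine lintegral_congr fun x => ?_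
          simp only [hGdef]
          rw [ENNReal.ofReal_mul hcst0]
      _ = ENNReal.ofReal cst *
            ∫⁻ x in AA ∩ BB, ENNReal.ofReal (dist x zQ ^ (-(n+1))) ∂μ :=
          lintegral_const_mul' _ _ ENNReal.ofReal_ne_top
      _ ≤ ENNReal.ofReal cst * ENNReal.ofReal (C₀ * 2^(n+2) / (lQ/2)) := by
          refine mul_le_mul_right ?_ _
          exact (lintegral_mono_set hsub).trans (htail zQ (lQ/2) (by linarith))
      _ = ENNReal.ofReal (cst * (C₀ * 2^(n+2) / (lQ/2))) :=
          (ENNReal.ofReal_mul hcst0).symm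
      _ = ENNReal.ofReal K₂ := by
          congr 1
          rw [hcstdef, hK₂def]
          field_simp
  -- pointwise comparisons integrated over AA ∩ BB
  have hcompPQ : ∫⁻ x in AA ∩ BB, F zP x ∂μ ≤
      (∫⁻ x in AA ∩ BB, F zQ x ∂μ) + ENNReal.ofReal K₂ := by
    have hpt : ∀ x ∈ AA ∩ BB, F zP x ≤ F zQ x + G x := by
      intro x hx
      have h1 := hptabs x hx
      have h2 : dist x zP ^ (-n) ≤ dist x zQ ^ (-n) + cst * dist x zQ ^ (-(n+1)) := by
        have := abs_sub_le_iff.1 h1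
        linarith [this.1]
      calc F zP x ≤ ENNReal.ofReal (dist x zQ ^ (-n) + cst * dist x zQ ^ (-(n+1))) :=
            ENNReal.ofReal_le_ofReal h2
        _ ≤ F zQ x + G x := ENNReal.ofReal_add_le
    calc ∫⁻ x in AA ∩ BB, F zP x ∂μ ≤ ∫⁻ x in AA ∩ BB, (F zQ x + G x) ∂μ :=
          setLIntegral_mono ((hFmeas zQ).add hGmeas) hpt
      _ = (∫⁻ x in AA ∩ BB, F zQ x ∂μ) + ∫⁻ x in AA ∩ BB, G x ∂μ :=
          lintegral_add_left (hFmeas zQ) _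
      _ ≤ (∫⁻ x in AA ∩ BB, F zQ x ∂μ) + ENNReal.ofReal K₂ :=
          add_le_add_right hGbound _
  have hcompQP : ∫⁻ x in AA ∩ BB, F zQ x ∂μ ≤
      (∫⁻ x in AA ∩ BB, F zP x ∂μ) + ENNReal.ofReal K₂ := by
    have hpt : ∀ x ∈ AA ∩ BB, F zQ x ≤ F zP x + G x := by
      intro x hx
      have h1 := hptabs x hx
      have h2 : dist x zQ ^ (-n) ≤ dist x zP ^ (-n) + cst * dist x zQ ^ (-(n+1)) := by
        have := abs_sub_le_iff.1 h1
        linarith [this.2]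
      calc F zQ x ≤ ENNReal.ofReal (dist x zP ^ (-n) + cst * dist x zQ ^ (-(n+1))) :=
            ENNReal.ofReal_le_ofReal h2
        _ ≤ F zP x + G x := ENNReal.ofReal_add_le
    calc ∫⁻ x in AA ∩ BB, F zQ x ∂μ ≤ ∫⁻ x in AA ∩ BB, (F zP x + G x) ∂μ :=
          setLIntegral_mono ((hFmeas zP).add hGmeas) hpt
      _ = (∫⁻ x in AA ∩ BB, F zP x ∂μ) + ∫⁻ x in AA ∩ BB, G x ∂μ :=
          lintegral_add_left (hFmeas zP) _
      _ ≤ (∫⁻ x in AA ∩ BB, F zP x ∂μ) + ENNReal.ofReal K₂ :=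
          add_le_add_right hGbound _
  -- annulus bound for AA \ BB
  have hAmB : ∫⁻ x in AA \ BB, F zP x ∂μ ≤ ENNReal.ofReal K₁ := by
    set r₁ : ℝ := max s (T - 2*a) with hr₁def
    have hr₁pos : 0 < r₁ := lt_of_lt_of_le hs_pos (le_max_left _ _)
    have hsub : AA \ BB ⊆ cube zP S \ cube zP r₁ := by
      rintro x ⟨⟨hxS, hxs⟩, hxB⟩
      have hxlQ : x ∉ cube zQ lQ := fun h => hxs (hQs h)
      have hxT : x ∉ cube zQ T := by
        intro h
        exact hxB ⟨h, hxlQ⟩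
      have hxT2a : x ∉ cube zP (T - 2*a) := by
        intro h
        apply hxT
        have := hshift_PQ (T - 2*a) h
        rwa [show T - 2*a + 2*a = T by ring] at this
      refine ⟨hxS, ?_⟩
      rcases le_total s (T - 2*a) with h | h
      · rw [hr₁def, max_eq_right h]; exact hxT2a
      · rw [hr₁def, max_eq_left h]; exact hxs
    have hS3r : S ≤ 3 * r₁ := by
      have h1 : T - 2*a ≤ r₁ := le_max_right _ _
      have h2 : s ≤ r₁ := le_max_left _ _
      linarith [hST]
    calc ∫⁻ x in AA \ BB, F zP x ∂μ
        ≤ ∫⁻ x in cube zP S \ cube zP r₁, F zP x ∂μ := lintegral_mono_set hsub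
      _ ≤ ENNReal.ofReal (C₀ * (q * S / r₁) ^ n) := hann zP r₁ S hr₁pos hS_pos
      _ ≤ ENNReal.ofReal K₁ := by
          refine ENNReal.ofReal_le_ofReal ?_
          rw [hK₁def]
          refine mul_le_mul_of_nonneg_left ?_ hC₀.le
          refine Real.rpow_le_rpow (by positivity) ?_ hn.le
          rw [div_le_iff₀ hr₁pos]
          calc q * S ≤ q * (3*r₁) := mul_le_mul_of_nonneg_left hS3r hq0.le
            _ = 3*q*r₁ := by ring
  -- annuli bound for BB \ AA
  have hBmA : ∫⁻ x in BB \ AA, F zQ x ∂μ ≤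
      ENNReal.ofReal K₁ + ENNReal.ofReal K₁ := by
    set r₂' : ℝ := max lQ (S - 2*a) with hr₂def
    have hr₂pos : 0 < r₂' := lt_of_lt_of_le hlQ (le_max_left _ _)
    have hsub : BB \ AA ⊆ (cube zQ (s + 2*a) \ cube zQ lQ) ∪
        (cube zQ T \ cube zQ r₂') := by
      rintro x ⟨⟨hxT, hxlQ⟩, hxA⟩
      by_cases hxs : x ∈ cube zP s
      · left
        exact ⟨hshift_PQ s hxs, hxlQ⟩
      · right
        have hxS : x ∉ cube zP S := by
          intro h
          exact hxA ⟨h, hxs⟩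
        have hxS2a : x ∉ cube zQ (S - 2*a) := by
          intro h
          apply hxS
          have := hshift_QP (S - 2*a) h
          rwa [show S - 2*a + 2*a = S by ring] at this
        refine ⟨hxT, ?_⟩
        rcases le_total lQ (S - 2*a) with h | h
        · rw [hr₂def, max_eq_right h]; exact hxS2a
        · rw [hr₂def, max_eq_left h]; exact hxlQ
    have hbnd1 : ∫⁻ x in cube zQ (s + 2*a) \ cube zQ lQ, F zQ x ∂μ ≤
        ENNReal.ofReal K₁ := by
      calc ∫⁻ x in cube zQ (s + 2*a) \ cube zQ lQ, F zQ x ∂μ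
          ≤ ENNReal.ofReal (C₀ * (q * (s + 2*a) / lQ) ^ n) :=
            hann zQ lQ (s + 2*a) hlQ (by linarith)
        _ ≤ ENNReal.ofReal K₁ := by
            refine ENNReal.ofReal_le_ofReal ?_
            rw [hK₁def]
            refine mul_le_mul_of_nonneg_left ?_ hC₀.le
            refine Real.rpow_le_rpow (by positivity) ?_ hn.le
            rw [div_le_iff₀ hlQ]
            have h5 : s + 2*a ≤ 3*lQ := by linarith [hsdef.le, hsdef.ge]
            calc q * (s + 2*a) ≤ q * (3*lQ) := mul_le_mul_of_nonneg_left h5 hq0.le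
              _ = 3*q*lQ := by ring
    have hbnd2 : ∫⁻ x in cube zQ T \ cube zQ r₂', F zQ x ∂μ ≤
        ENNReal.ofReal K₁ := by
      have hT3r : T ≤ 3 * r₂' := by
        have h1 : S - 2*a ≤ r₂' := le_max_right _ _
        have h2 : lQ ≤ r₂' := le_max_left _ _
        linarith [hTS]
      calc ∫⁻ x in cube zQ T \ cube zQ r₂', F zQ x ∂μ
          ≤ ENNReal.ofReal (C₀ * (q * T / r₂') ^ n) :=
            hann zQ r₂' T hr₂pos hT_pos
        _ ≤ ENNReal.ofReal K₁ := by
            refine ENNReal.ofReal_le_ofReal ?_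
            rw [hK₁def]
            refine mul_le_mul_of_nonneg_left ?_ hC₀.le
            refine Real.rpow_le_rpow (by positivity) ?_ hn.le
            rw [div_le_iff₀ hr₂pos]
            calc q * T ≤ q * (3*r₂') := mul_le_mul_of_nonneg_left hT3r hq0.le
              _ = 3*q*r₂' := by ring
    calc ∫⁻ x in BB \ AA, F zQ x ∂μ
        ≤ ∫⁻ x in (cube zQ (s + 2*a) \ cube zQ lQ) ∪ (cube zQ T \ cube zQ r₂'),
            F zQ x ∂μ := lintegral_mono_set hsub
      _ ≤ (∫⁻ x in cube zQ (s + 2*a) \ cube zQ lQ, F zQ x ∂μ) +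
            ∫⁻ x in cube zQ T \ cube zQ r₂', F zQ x ∂μ := lintegral_union_le _ _ _
      _ ≤ ENNReal.ofReal K₁ + ENNReal.ofReal K₁ := add_le_add hbnd1 hbnd2
  -- assemble the two-sided comparison of IA and IB
  have hIAle : IA ≤ IB + (ENNReal.ofReal K₂ + ENNReal.ofReal K₁) := by
    have hAeq : AA = (AA ∩ BB) ∪ (AA \ BB) := (Set.inter_union_diff AA BB).symm
    calc IA = ∫⁻ x in (AA ∩ BB) ∪ (AA \ BB), F zP x ∂μ := by rw [hIAdef, ← hAeq]
      _ ≤ (∫⁻ x in AA ∩ BB, F zP x ∂μ) + ∫⁻ x in AA \ BB, F zP x ∂μ :=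
          lintegral_union_le _ _ _
      _ ≤ ((∫⁻ x in AA ∩ BB, F zQ x ∂μ) + ENNReal.ofReal K₂) + ENNReal.ofReal K₁ :=
          add_le_add hcompPQ hAmB
      _ ≤ (IB + ENNReal.ofReal K₂) + ENNReal.ofReal K₁ := by
          refine add_le_add (add_le_add ?_ le_rfl) le_rfl
          exact lintegral_mono_set Set.inter_subset_right
      _ = IB + (ENNReal.ofReal K₂ + ENNReal.ofReal K₁) := by ring
  have hIBle : IB ≤ IA + (ENNReal.ofReal K₂ + (ENNReal.ofReal K₁ + ENNReal.ofReal K₁)) := by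
    have hBeq : BB = (BB ∩ AA) ∪ (BB \ AA) := (Set.inter_union_diff BB AA).symm
    calc IB = ∫⁻ x in (BB ∩ AA) ∪ (BB \ AA), F zQ x ∂μ := by rw [hIBdef, ← hBeq]
      _ ≤ (∫⁻ x in BB ∩ AA, F zQ x ∂μ) + ∫⁻ x in BB \ AA, F zQ x ∂μ :=
          lintegral_union_le _ _ _
      _ ≤ ((∫⁻ x in AA ∩ BB, F zP x ∂μ) + ENNReal.ofReal K₂) +
            (ENNReal.ofReal K₁ + ENNReal.ofReal K₁) := by
          refine add_le_add ?_ hBmA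
          rw [Set.inter_comm BB AA]
          exact hcompQP
      _ ≤ (IA + ENNReal.ofReal K₂) + (ENNReal.ofReal K₁ + ENNReal.ofReal K₁) := by
          refine add_le_add (add_le_add ?_ le_rfl) le_rfl
          exact lintegral_mono_set Set.inter_subset_left
      _ = IA + (ENNReal.ofReal K₂ + (ENNReal.ofReal K₁ + ENNReal.ofReal K₁)) := by ring
  -- convert to real numbers
  have hXr : X.toReal = Y.toReal + IA.toReal := by
    rw [hXsplit, ENNReal.toReal_add hYfin hIAfin]
  have hIAr : IA.toReal ≤ IB.toReal + (K₂ + K₁) := by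
    have := ENNReal.toReal_mono (by
      refine ENNReal.add_ne_top.2 ⟨hIBfin, ?_⟩
      exact ENNReal.add_ne_top.2 ⟨ENNReal.ofReal_ne_top, ENNReal.ofReal_ne_top⟩) hIAle
    rwa [ENNReal.toReal_add hIBfin
        (ENNReal.add_ne_top.2 ⟨ENNReal.ofReal_ne_top, ENNReal.ofReal_ne_top⟩),
      ENNReal.toReal_add ENNReal.ofReal_ne_top ENNReal.ofReal_ne_top,
      ENNReal.toReal_ofReal hK₂pos.le, ENNReal.toReal_ofReal hK₁pos.le] at this
  have hIBr : IB.toReal ≤ IA.toReal + (K₂ + (K₁ + K₁)) := by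
    have := ENNReal.toReal_mono (by
      refine ENNReal.add_ne_top.2 ⟨hIAfin, ?_⟩
      refine ENNReal.add_ne_top.2 ⟨ENNReal.ofReal_ne_top, ?_⟩
      exact ENNReal.add_ne_top.2 ⟨ENNReal.ofReal_ne_top, ENNReal.ofReal_ne_top⟩) hIBle
    rwa [ENNReal.toReal_add hIAfin, ENNReal.toReal_add ENNReal.ofReal_ne_top,
      ENNReal.toReal_add ENNReal.ofReal_ne_top ENNReal.ofReal_ne_top,
      ENNReal.toReal_ofReal hK₂pos.le, ENNReal.toReal_ofReal hK₁pos.le] at this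
    · exact ENNReal.add_ne_top.2 ⟨ENNReal.ofReal_ne_top, ENNReal.ofReal_ne_top⟩
    · refine ENNReal.add_ne_top.2 ⟨ENNReal.ofReal_ne_top, ?_⟩
      exact ENNReal.add_ne_top.2 ⟨ENNReal.ofReal_ne_top, ENNReal.ofReal_ne_top⟩
  rw [hcd1, hcd2, hcd3, hXr]
  rw [abs_le]
  constructor <;> linarith
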